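/- Let g be a finite dimensional Lie algebra over a field k, M a finite dimensional g-module, and σ_1, …, σ_r pairwise commuting elements of g such that, for each t, g is spanned by eigenvectors of ad σ_t with eigenvalues in k. If F is an n-cocycle of g with coefficients in M (with n ≥ r) which is homogeneous of degree 0 with respect to each σ_t, then the iterated contraction ι_{σ_r} ι_{σ_{r−1}} ⋯ ι_{σ_1} F is an (n−r)-cocycle. -/
import Mathlib


variable {k L M : Type*}

section

variable [CommRing k] [LieRing L] [LieAlgebra k L]
  [AddCommGroup M] [Module k M] [LieRingModule L M] [LieModule k L M]

/-- The Chevalley–Eilenberg coboundary of an `n`-cochain (given as a function on `n`-tuples):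
`(δF)(a₀,…,aₙ) = ∑ᵢ (−1)ⁱ ⁅aᵢ, F(…,âᵢ,…)⁆
  + ∑_{i<j} (−1)^{i+j} F(⁅aᵢ,aⱼ⁆, a₀,…,âᵢ,…,âⱼ,…,aₙ)`.
In the second sum, the pair `i < j` is encoded as `(i, i.succAbove j)` with `(i : ℕ) ≤ (j : ℕ)`,
so that the actual second index is `j + 1` and the sign is `(−1)^{i+j+1}`. -/
def ceCoboundary : ∀ {n : ℕ}, ((Fin n → L) → M) → (Fin (n + 1) → L) → M
  | 0, F => fun a => ⁅a 0, F Fin.elim0⁆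
  | m + 1, F => fun a =>
      (∑ i : Fin (m + 2), ((-1 : ℤ) ^ (i : ℕ)) • ⁅a i, F (a ∘ i.succAbove)⁆) +
      ∑ i : Fin (m + 2), ∑ j : Fin (m + 1),
        if (i : ℕ) ≤ (j : ℕ) then
          ((-1 : ℤ) ^ ((i : ℕ) + (j : ℕ) + 1)) •
            F (Fin.cons ⁅a i, a (i.succAbove j)⁆ ((a ∘ i.succAbove) ∘ j.succAbove))
        else 0

/-- Contraction `ι_σ F` of a cochain `F` with an element `σ` in the first slot. -/
def ceContract {n : ℕ} (σ : L) (F : (Fin (n + 1) → L) → M) : (Fin n → L) → M :=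
  fun v => F (Fin.cons σ v)

/-- An `n`-cochain `F` is homogeneous of degree `r` with respect to `σ` if whenever
`⁅σ, aᵢ⁆ = λᵢ • aᵢ` for all `i`, one has `⁅σ, F(a₁,…,aₙ)⁆ = (λ₁ + ⋯ + λₙ + r) • F(a₁,…,aₙ)`. -/
def IsHomogeneousOfDegree (σ : L) (r : k) {n : ℕ} (F : (Fin n → L) → M) : Prop :=
  ∀ (a : Fin n → L) (lam : Fin n → k),
    (∀ i, ⁅σ, a i⁆ = lam i • a i) → ⁅σ, F a⁆ = ((∑ i, lam i) + r) • F a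

end

section

variable [CommRing k] [LieRing L] [LieAlgebra k L]
  [AddCommGroup M] [Module k M] [LieRingModule L M] [LieModule k L M]

/-- Iterated contraction `ι_{σ_r} ι_{σ_{r−1}} ⋯ ι_{σ_1} F`, which sends an `(n+r)`-cochain
`F` to the `n`-cochain `(a₁,…,aₙ) ↦ F(σ₁,…,σ_r,a₁,…,aₙ)`. -/
def ceContractIter : ∀ {r : ℕ}, (Fin r → L) → ∀ {n : ℕ}, ((Fin (n + r) → L) → M) →
    (Fin n → L) → M
  | 0, _, _, F => F
  | _ + 1, σ, _, F => ceContractIter (σ ∘ Fin.succ) (ceContract (σ 0) F)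

end

set_option linter.unusedSectionVars false
set_option maxHeartbeats 1000000

section AuxLemmas

variable [CommRing k] [LieRing L] [LieAlgebra k L]
  [AddCommGroup M] [Module k M] [LieRingModule L M] [LieModule k L M]

lemma cons_comp_succ_succAbove {α : Sort*} {m : ℕ} (y : α) (g : Fin (m + 1) → α)
    (q : Fin (m + 1)) :
    (Fin.cons y g : Fin (m + 2) → α) ∘ (q.succ).succAbove = Fin.cons y (g ∘ q.succAbove) := by
  funext t
  cases t using Fin.cases with
  | zero => simp
  | succ t => simp [Fin.succ_succAbove_succ]


lemma cons_comp_succ {α : Sort*} {m : ℕ} (y : α) (g : Fin (m + 1) → α) :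
    (Fin.cons y g : Fin (m + 2) → α) ∘ Fin.succ = g := by
  funext t; simp


lemma alt_swap01 {m : ℕ} (F : AlternatingMap k L M (Fin (m + 2))) (x y : L) (w : Fin m → L) :
    F (Fin.cons x (Fin.cons y w)) = - F (Fin.cons y (Fin.cons x w)) := by
  have h : (Fin.cons x (Fin.cons y w) : Fin (m + 2) → L) =
      (Fin.cons y (Fin.cons x w)) ∘ Equiv.swap (0 : Fin (m + 2)) 1 := by
    funext t
    cases t using Fin.cases with
    | zero =>
      rw [Function.comp_apply, Equiv.swap_apply_left, ← Fin.succ_zero_eq_one,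
        Fin.cons_succ, Fin.cons_zero, Fin.cons_zero]
    | succ s =>
      cases s using Fin.cases with
      | zero =>
        rw [Function.comp_apply, Fin.succ_zero_eq_one, Equiv.swap_apply_right,
          Fin.cons_zero, ← Fin.succ_zero_eq_one, Fin.cons_succ, Fin.cons_zero]
      | succ u =>
        have h0 : u.succ.succ ≠ (0 : Fin (m + 2)) := Fin.succ_ne_zero _
        have h1 : u.succ.succ ≠ (1 : Fin (m + 2)) := by
          rw [← Fin.succ_zero_eq_one]
          intro h
          exact Fin.succ_ne_zero _ (Fin.succ_injective _ h)
        rw [Function.comp_apply, Equiv.swap_apply_of_ne_of_ne h0 h1,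
          Fin.cons_succ, Fin.cons_succ, Fin.cons_succ, Fin.cons_succ]
  rw [h, F.map_swap (Fin.cons y (Fin.cons x w)) (by
    intro h; exact one_ne_zero (α := Fin (m + 2)) h.symm)]


lemma alt_cons_succAbove : ∀ {m : ℕ} (F : AlternatingMap k L M (Fin (m + 1)))
    (j : Fin (m + 1)) (a : Fin (m + 1) → L) (x : L),
    F (Fin.cons x (a ∘ j.succAbove)) = ((-1 : ℤ) ^ (j : ℕ)) • F (Function.update a j x) := by
  intro m
  induction m with
  | zero =>
    intro F j a x
    have hj : j = 0 := Fin.fin_one_eq_zero j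
    subst hj
    have h1 : (Fin.cons x (a ∘ (0 : Fin 1).succAbove) : Fin 1 → L) = Function.update a 0 x := by
      funext t
      have ht : t = 0 := Fin.fin_one_eq_zero t
      subst ht
      simp
    simp only [Fin.val_zero, pow_zero, one_smul]
    exact congrArg F h1
  | succ m ih =>
    intro F j a x
    cases j using Fin.cases with
    | zero =>
      have h1 : (Fin.cons x (a ∘ (0 : Fin (m + 2)).succAbove) : Fin (m + 2) → L)
          = Function.update a 0 x := by
        funext t
        cases t using Fin.cases with
        | zero => simp
        | succ t => simp [Function.update_apply, Fin.succ_ne_zero]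
      simp only [Fin.val_zero, pow_zero, one_smul]
      exact congrArg F h1
    | succ q =>
      have ha : (a ∘ (q.succ).succAbove : Fin (m + 1) → L)
          = Fin.cons (a 0) ((a ∘ Fin.succ) ∘ q.succAbove) := by
        funext t
        cases t using Fin.cases with
        | zero => simp
        | succ t => simp [Fin.succ_succAbove_succ]
      have hupd : (Fin.cons (a 0) (Function.update (a ∘ Fin.succ) q x) : Fin (m + 2) → L)
          = Function.update a q.succ x := by
        funext t
        cases t using Fin.cases with
        | zero =>
          simp [Function.update_apply, (Fin.succ_ne_zero q).symm]
        | succ t =>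
          simp [Function.update_apply, Fin.succ_inj]
      have hcurry := ih (F.curryLeft (a 0)) q (a ∘ Fin.succ) x
      have hc : ∀ v : Fin (m + 1) → L, (F.curryLeft (a 0)) v = F (Fin.cons (a 0) v) :=
        fun v => rfl
      rw [ha, alt_swap01 F x (a 0) ((a ∘ Fin.succ) ∘ q.succAbove), ← hc, hcurry, hc, hupd]
      rw [Fin.val_succ, pow_succ, ← neg_smul]
      ring_nf

lemma multilinear_eq_zero_of_span {E : Set L} (hE : Submodule.span k E = ⊤) :
    ∀ {m : ℕ} (Φ : MultilinearMap k (fun _ : Fin m => L) M),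
      (∀ a : Fin m → L, (∀ i, a i ∈ E) → Φ a = 0) → ∀ a, Φ a = 0 := by
  intro m
  induction m with
  | zero =>
    intro Φ h a
    exact h a (fun i => i.elim0)
  | succ m ih =>
    intro Φ h a
    have key : ∀ x : L, ∀ v : Fin m → L, Φ (Fin.cons x v) = 0 := by
      intro x
      have hx : x ∈ Submodule.span k E := hE ▸ Submodule.mem_top
      induction hx using Submodule.span_induction with
      | mem y hy =>
        intro v
        refine ih (Φ.curryLeft y) ?_ v
        intro w hw
        refine h (Fin.cons y w) ?_
        intro i
        cases i using Fin.cases with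
        | zero => simpa using hy
        | succ i => simpa using hw i
      | zero =>
        intro v
        exact Φ.map_coord_zero 0 (by simp)
      | add y z _ _ hy hz =>
        intro v
        rw [Φ.cons_add v y z, hy v, hz v, add_zero]
      | smul c y _ hy =>
        intro v
        rw [Φ.cons_smul v c y, hy v, smul_zero]
    have := key (a 0) (Fin.tail a)
    rwa [Fin.cons_self_tail a] at this


lemma lie_deriv_eq (σ : L) {m : ℕ} (F : AlternatingMap k L M (Fin m))
    (hE : Submodule.span k {y : L | ∃ c : k, ⁅σ, y⁆ = c • y} = ⊤)
    (hF : IsHomogeneousOfDegree σ (0 : k) ⇑F) (a : Fin m → L) :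
    ⁅σ, F a⁆ = ∑ i, F (Function.update a i ⁅σ, a i⁆) := by
  classical
  set lb : L →ₗ[k] L :=
    { toFun := fun y => ⁅σ, y⁆
      map_add' := fun x y => lie_add σ x y
      map_smul' := fun c x => lie_smul c σ x } with hlb
  set lbM : M →ₗ[k] M :=
    { toFun := fun z => ⁅σ, z⁆
      map_add' := fun x y => lie_add σ x y
      map_smul' := fun c x => lie_smul c σ x } with hlbM
  set Φ : MultilinearMap k (fun _ : Fin m => L) M :=
    lbM.compMultilinearMap F.toMultilinearMap -
      ∑ i : Fin m, F.toMultilinearMap.compLinearMap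
        (fun j => if j = i then lb else LinearMap.id) with hΦ
  have hΦapp : ∀ b : Fin m → L,
      Φ b = ⁅σ, F b⁆ - ∑ i, F (Function.update b i ⁅σ, b i⁆) := by
    intro b
    rw [hΦ]
    rw [MultilinearMap.sub_apply, MultilinearMap.sum_apply]
    congr 1
    refine Finset.sum_congr rfl fun i _ => ?_
    rw [MultilinearMap.compLinearMap_apply]
    have harg : (fun j => (if j = i then lb else LinearMap.id) (b j))
        = Function.update b i ⁅σ, b i⁆ := by
      funext j
      by_cases hj : j = i
      · subst hj; simp [Function.update_apply, hlb]
      · simp [Function.update_apply, hj]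
    rw [harg]
    rfl
  have hvanish : ∀ b : Fin m → L,
      (∀ i, b i ∈ {y : L | ∃ c : k, ⁅σ, y⁆ = c • y}) → Φ b = 0 := by
    intro b hb
    choose lam hlam using hb
    rw [hΦapp b]
    have h1 : ⁅σ, F b⁆ = (∑ i, lam i) • F b := by
      have := hF b lam hlam
      rwa [add_zero] at this
    have h2 : ∀ i, F (Function.update b i ⁅σ, b i⁆) = lam i • F b := by
      intro i
      rw [hlam i, F.map_update_smul, Function.update_eq_self]
    rw [h1]
    rw [Finset.sum_congr rfl fun i _ => h2 i, ← Finset.sum_smul, sub_self]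
  have := multilinear_eq_zero_of_span hE Φ hvanish a
  rw [hΦapp a] at this
  exact sub_eq_zero.mp this

lemma cartan {m : ℕ} (σ : L) (F : AlternatingMap k L M (Fin (m + 1))) (a : Fin (m + 1) → L) :
    ceCoboundary (ceContract σ ⇑F) a
      = (⁅σ, F a⁆ - ∑ i, F (Function.update a i ⁅σ, a i⁆)) - ceCoboundary ⇑F (Fin.cons σ a) := by
  cases m with
  | zero =>
    have e0 : ∀ v : Fin 0 → L, v = Fin.elim0 := fun v => Subsingleton.elim _ _
    have hLHS : ceCoboundary (ceContract σ ⇑F) a = ⁅a 0, F (Fin.cons σ Fin.elim0)⁆ := rfl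
    have hRHS : ceCoboundary ⇑F (Fin.cons σ a) =
        (∑ i : Fin 2, ((-1 : ℤ) ^ (i : ℕ)) •
          ⁅(Fin.cons σ a : Fin 2 → L) i, F ((Fin.cons σ a : Fin 2 → L) ∘ i.succAbove)⁆) +
        ∑ i : Fin 2, ∑ j : Fin 1,
          if (i : ℕ) ≤ (j : ℕ) then
            ((-1 : ℤ) ^ ((i : ℕ) + (j : ℕ) + 1)) •
              F (Fin.cons ⁅(Fin.cons σ a : Fin 2 → L) i, (Fin.cons σ a : Fin 2 → L) (i.succAbove j)⁆
                (((Fin.cons σ a : Fin 2 → L) ∘ i.succAbove) ∘ j.succAbove)) else 0 := rfl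
    have h1 : ((Fin.cons σ a : Fin 2 → L) ∘ (0 : Fin 2).succAbove) = a := by
      funext t
      have : t = 0 := Fin.fin_one_eq_zero t
      subst this
      simp
    have h2 : ((Fin.cons σ a : Fin 2 → L) ∘ (1 : Fin 2).succAbove) = Fin.cons σ Fin.elim0 := by
      funext t
      have : t = 0 := Fin.fin_one_eq_zero t
      subst this
      rfl
    have h3 : ∀ x : L, ∀ w : Fin 0 → L, (Fin.cons x w : Fin 1 → L) = Function.update a 0 x := by
      intro x w
      funext t
      have : t = 0 := Fin.fin_one_eq_zero t
      subst this
      simp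
    have h4 : ∑ i : Fin 1, F (Function.update a i ⁅σ, a i⁆)
        = F (Function.update a 0 ⁅σ, a 0⁆) := by
      rw [Fin.sum_univ_one]
    rw [hLHS, hRHS, h4]
    rw [Fin.sum_univ_two, Fin.sum_univ_two, Fin.sum_univ_one, Fin.sum_univ_one]
    rw [h1, h2]
    simp only [Fin.val_zero, Fin.val_one, Fin.cons_zero, pow_zero, pow_one, one_smul,
      neg_smul, neg_one_zsmul]
    norm_num
    rw [h3 ⁅σ, a 0⁆ (a ∘ Fin.succ)]
    abel
  | succ n =>
    set G := ceContract σ ⇑F with hG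
    set b := (Fin.cons σ a : Fin (n + 3) → L) with hb
    have hLHS : ceCoboundary G a =
        (∑ i : Fin (n + 2), ((-1 : ℤ) ^ (i : ℕ)) • ⁅a i, G (a ∘ i.succAbove)⁆) +
        ∑ i : Fin (n + 2), ∑ j : Fin (n + 1),
          if (i : ℕ) ≤ (j : ℕ) then
            ((-1 : ℤ) ^ ((i : ℕ) + (j : ℕ) + 1)) •
              G (Fin.cons ⁅a i, a (i.succAbove j)⁆ ((a ∘ i.succAbove) ∘ j.succAbove))
          else 0 := rfl
    have hRHS : ceCoboundary ⇑F b =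
        (∑ i : Fin (n + 3), ((-1 : ℤ) ^ (i : ℕ)) • ⁅b i, F (b ∘ i.succAbove)⁆) +
        ∑ i : Fin (n + 3), ∑ j : Fin (n + 2),
          if (i : ℕ) ≤ (j : ℕ) then
            ((-1 : ℤ) ^ ((i : ℕ) + (j : ℕ) + 1)) •
              F (Fin.cons ⁅b i, b (i.succAbove j)⁆ ((b ∘ i.succAbove) ∘ j.succAbove))
          else 0 := rfl
    have hbsucc : ∀ p : Fin (n + 2), b ∘ (p.succ).succAbove = Fin.cons σ (a ∘ p.succAbove) :=
      fun p => cons_comp_succ_succAbove σ a p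
    have hbzero : b ∘ (0 : Fin (n + 3)).succAbove = a := by
      funext t; simp [hb]
    -- first sums
    have hS1 : (∑ i : Fin (n + 3), ((-1 : ℤ) ^ (i : ℕ)) • ⁅b i, F (b ∘ i.succAbove)⁆)
        = ⁅σ, F a⁆ -
          ∑ i : Fin (n + 2), ((-1 : ℤ) ^ (i : ℕ)) • ⁅a i, G (a ∘ i.succAbove)⁆ := by
      rw [Fin.sum_univ_succ]
      have h0 : ((-1 : ℤ) ^ ((0 : Fin (n + 3)) : ℕ)) • ⁅b 0, F (b ∘ (0 : Fin (n+3)).succAbove)⁆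
          = ⁅σ, F a⁆ := by
        rw [hbzero]
        simp [hb]
      have hstep : ∀ p : Fin (n + 2),
          ((-1 : ℤ) ^ ((p.succ : Fin (n + 3)) : ℕ)) • ⁅b p.succ, F (b ∘ (p.succ).succAbove)⁆
          = -(((-1 : ℤ) ^ (p : ℕ)) • ⁅a p, G (a ∘ p.succAbove)⁆) := by
        intro p
        rw [hbsucc p, Fin.val_succ, pow_succ, mul_neg_one, neg_smul]
        rfl
      rw [h0, Finset.sum_congr rfl (fun p _ => hstep p), Finset.sum_neg_distrib,
        ← sub_eq_add_neg]
    -- second sums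
    have hS2 : (∑ i : Fin (n + 3), ∑ j : Fin (n + 2),
          if (i : ℕ) ≤ (j : ℕ) then
            ((-1 : ℤ) ^ ((i : ℕ) + (j : ℕ) + 1)) •
              F (Fin.cons ⁅b i, b (i.succAbove j)⁆ ((b ∘ i.succAbove) ∘ j.succAbove))
          else 0)
        = (- ∑ i, F (Function.update a i ⁅σ, a i⁆)) -
          ∑ i : Fin (n + 2), ∑ j : Fin (n + 1),
            if (i : ℕ) ≤ (j : ℕ) then
              ((-1 : ℤ) ^ ((i : ℕ) + (j : ℕ) + 1)) •
                G (Fin.cons ⁅a i, a (i.succAbove j)⁆ ((a ∘ i.succAbove) ∘ j.succAbove))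
            else 0 := by
      rw [Fin.sum_univ_succ]
      have hrow0 : (∑ j : Fin (n + 2),
          if ((0 : Fin (n+3)) : ℕ) ≤ (j : ℕ) then
            ((-1 : ℤ) ^ (((0 : Fin (n+3)) : ℕ) + (j : ℕ) + 1)) •
              F (Fin.cons ⁅b 0, b ((0 : Fin (n+3)).succAbove j)⁆
                ((b ∘ (0 : Fin (n+3)).succAbove) ∘ j.succAbove))
          else 0)
          = - ∑ i, F (Function.update a i ⁅σ, a i⁆) := by
        rw [← Finset.sum_neg_distrib]
        refine Finset.sum_congr rfl fun j _ => ?_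
        rw [if_pos (show (((0 : Fin (n+3)) : ℕ)) ≤ (j : ℕ) by simp), hbzero]
        have hb0 : b 0 = σ := rfl
        have hbj : b ((0 : Fin (n+3)).succAbove j) = a j := by
          rw [Fin.zero_succAbove]; rfl
        rw [hb0, hbj, alt_cons_succAbove F j a ⁅σ, a j⁆, smul_smul]
        have : ((-1 : ℤ) ^ (((0 : Fin (n+3)) : ℕ) + (j : ℕ) + 1)) * ((-1 : ℤ) ^ (j : ℕ))
            = -1 := by
          rw [← pow_add]
          exact Odd.neg_one_pow ⟨(j : ℕ), by simp only [Fin.val_zero]; omega⟩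
        rw [this, neg_one_zsmul]
      have hrow : ∀ p : Fin (n + 2), (∑ j : Fin (n + 2),
          if ((p.succ : Fin (n+3)) : ℕ) ≤ (j : ℕ) then
            ((-1 : ℤ) ^ (((p.succ : Fin (n+3)) : ℕ) + (j : ℕ) + 1)) •
              F (Fin.cons ⁅b p.succ, b ((p.succ).succAbove j)⁆
                ((b ∘ (p.succ).succAbove) ∘ j.succAbove))
          else 0)
          = - ∑ q : Fin (n + 1),
              if (p : ℕ) ≤ (q : ℕ) then
                ((-1 : ℤ) ^ ((p : ℕ) + (q : ℕ) + 1)) •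
                  G (Fin.cons ⁅a p, a (p.succAbove q)⁆ ((a ∘ p.succAbove) ∘ q.succAbove))
              else 0 := by
        intro p
        rw [Fin.sum_univ_succ]
        have hj0 : (if ((p.succ : Fin (n+3)) : ℕ) ≤ (((0:Fin (n+2)) : ℕ)) then
            ((-1 : ℤ) ^ (((p.succ : Fin (n+3)) : ℕ) + (((0:Fin (n+2))) : ℕ) + 1)) •
              F (Fin.cons ⁅b p.succ, b ((p.succ).succAbove 0)⁆
                ((b ∘ (p.succ).succAbove) ∘ (0 : Fin (n+2)).succAbove))
          else 0) = 0 := by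
          have hne : ¬ (((p.succ : Fin (n+3)) : ℕ) ≤ (((0 : Fin (n+2))) : ℕ)) := by
            simp [Fin.val_succ]
          rw [if_neg hne]
        rw [hj0, zero_add, ← Finset.sum_neg_distrib]
        refine Finset.sum_congr rfl fun q _ => ?_
        have hcond : (((p.succ : Fin (n+3)) : ℕ) ≤ ((q.succ : Fin (n+2)) : ℕ))
            ↔ ((p : ℕ) ≤ (q : ℕ)) := by
          simp [Fin.val_succ]
        by_cases hpq : (p : ℕ) ≤ (q : ℕ)
        · rw [if_pos (hcond.mpr hpq), if_pos hpq]
          have hb1 : b p.succ = a p := rfl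
          have hb2 : b ((p.succ).succAbove q.succ) = a (p.succAbove q) := by
            rw [Fin.succ_succAbove_succ]; rfl
          have hb3 : (b ∘ (p.succ).succAbove) ∘ (q.succ).succAbove
              = Fin.cons σ ((a ∘ p.succAbove) ∘ q.succAbove) := by
            rw [hbsucc p]
            exact cons_comp_succ_succAbove σ (a ∘ p.succAbove) q
          rw [hb1, hb2, hb3,
            alt_swap01 F ⁅a p, a (p.succAbove q)⁆ σ ((a ∘ p.succAbove) ∘ q.succAbove)]
          have hGc : F (Fin.cons σ (Fin.cons ⁅a p, a (p.succAbove q)⁆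
              ((a ∘ p.succAbove) ∘ q.succAbove)))
              = G (Fin.cons ⁅a p, a (p.succAbove q)⁆ ((a ∘ p.succAbove) ∘ q.succAbove)) := rfl
          rw [hGc, smul_neg, Fin.val_succ, Fin.val_succ]
          have hsgn : ((-1 : ℤ) ^ (((p:ℕ)+1) + ((q:ℕ)+1) + 1))
              = ((-1 : ℤ) ^ ((p:ℕ) + (q:ℕ) + 1)) := by
            have : ((p:ℕ)+1) + ((q:ℕ)+1) + 1 = ((p:ℕ) + (q:ℕ) + 1) + 2 := by ring
            rw [this, pow_add]
            norm_num
          rw [hsgn]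
        · rw [if_neg (fun h => hpq (hcond.mp h)), if_neg hpq, neg_zero]
      rw [hrow0, Finset.sum_congr rfl (fun p _ => hrow p), Finset.sum_neg_distrib,
        ← sub_eq_add_neg]
    rw [hLHS, hRHS, hS1, hS2]
    abel

lemma ceCoboundary_contract_eq_zero (σ : L) {m : ℕ} (F : AlternatingMap k L M (Fin (m + 1)))
    (hE : Submodule.span k {y : L | ∃ c : k, ⁅σ, y⁆ = c • y} = ⊤)
    (hF : IsHomogeneousOfDegree σ (0 : k) ⇑F)
    (hcocycle : ceCoboundary ⇑F = 0) :
    ceCoboundary (ceContract σ ⇑F) = 0 := by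
  funext a
  rw [cartan σ F a, ← lie_deriv_eq σ F hE hF a]
  have h2 : ceCoboundary ⇑F (Fin.cons σ a) = 0 := by rw [hcocycle]; rfl
  rw [h2]
  simp

lemma homog_curry (σ τ : L) {m : ℕ} (F : AlternatingMap k L M (Fin (m + 1)))
    (hcomm : ⁅τ, σ⁆ = 0) (hF : IsHomogeneousOfDegree τ (0 : k) ⇑F) :
    IsHomogeneousOfDegree τ (0 : k) ⇑(F.curryLeft σ) := by
  intro a lam hlam
  have h0 : ⁅τ, σ⁆ = (0 : k) • σ := by rw [hcomm, zero_smul]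
  have key := hF (Fin.cons σ a) (Fin.cons 0 lam) (by
    intro i
    cases i using Fin.cases with
    | zero => simpa using h0
    | succ i => simpa using hlam i)
  rw [Fin.sum_cons] at key
  have hc : (F.curryLeft σ) a = F (Fin.cons σ a) := rfl
  rw [hc, key, zero_add]

lemma stmt7_aux : ∀ (r : ℕ) (σ : Fin r → L),
    (∀ s t, ⁅σ s, σ t⁆ = 0) →
    (∀ t, Submodule.span k {y : L | ∃ c : k, ⁅σ t, y⁆ = c • y} = ⊤) →
    ∀ (n : ℕ) (F : AlternatingMap k L M (Fin (n + r))),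
      (∀ t, IsHomogeneousOfDegree (σ t) (0 : k) ⇑F) →
      ceCoboundary ⇑F = 0 → ceCoboundary (ceContractIter σ ⇑F) = 0
  | 0, σ, _, _, n, F, _, hco => hco
  | r + 1, σ, hcomm, hL, n, F, hF, hco => by
    have hG : ceContract (σ 0) ⇑F = ⇑(F.curryLeft (σ 0)) := rfl
    show ceCoboundary (ceContractIter (σ ∘ Fin.succ) (ceContract (σ 0) ⇑F)) = 0
    rw [hG]
    exact stmt7_aux r (σ ∘ Fin.succ) (fun s t => hcomm s.succ t.succ) (fun t => hL t.succ) n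
      (F.curryLeft (σ 0))
      (fun t => homog_curry (σ 0) (σ t.succ) F (hcomm t.succ 0) (hF t.succ))
      (ceCoboundary_contract_eq_zero (σ 0) F (hL 0) (hF 0) hco)

end AuxLemmas

/-- Corollary 2: if `σ₁, …, σ_r` are commuting ad-semisimple elements and `F` is an
`(n+r)`-cocycle homogeneous of degree `0` with respect to each `σ_t`, then the iterated
contraction `ι_{σ_r} ⋯ ι_{σ_1} F` is an `n`-cocycle. -/
theorem stmt7 [Field k] [LieRing L] [LieAlgebra k L]
    [AddCommGroup M] [Module k M] [LieRingModule L M] [LieModule k L M]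
    [FiniteDimensional k L] [FiniteDimensional k M]
    {r : ℕ} (σ : Fin r → L)
    (hcomm : ∀ s t, ⁅σ s, σ t⁆ = 0)
    (hL : ∀ t, Submodule.span k {y : L | ∃ c : k, ⁅σ t, y⁆ = c • y} = ⊤)
    {n : ℕ} (F : AlternatingMap k L M (Fin (n + r)))
    (hF : ∀ t, IsHomogeneousOfDegree (σ t) (0 : k) ⇑F)
    (hcocycle : ceCoboundary ⇑F = 0) :
    ceCoboundary (ceContractIter σ ⇑F) = 0 := by
  exact stmt7_aux r σ hcomm hL n F hF hcocycle
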